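/- Let η be a finite measure on a measurable space E and V: E → ℝ a bounded measurable potential. Then the function λ ↦ ESS(η, e^{-λV}) := η(e^{-λV})² / η(e^{-2λV}) is non-increasing on [0, ∞). -/

import Mathlib

open MeasureTheory

private lemma ofReal_exp_rpow (r θ : ℝ) :
    ENNReal.ofReal (Real.exp r) ^ θ = ENNReal.ofReal (Real.exp (θ * r)) := by
  rw [ENNReal.ofReal_rpow_of_pos (Real.exp_pos r), ← Real.exp_mul, mul_comm]

/-- Hölder interpolation: log-convexity of `s ↦ ∫⁻ e^{-sV} dη`. -/
private lemma lintegral_exp_interp {E : Type*} [MeasurableSpace E] (η : Measure E)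
    (V : E → ℝ) (hV : Measurable V) (u v θ : ℝ) (h0 : 0 ≤ θ) (h1 : θ ≤ 1) :
    ∫⁻ x, ENNReal.ofReal (Real.exp (-(θ * u + (1 - θ) * v) * V x)) ∂η ≤
      (∫⁻ x, ENNReal.ofReal (Real.exp (-u * V x)) ∂η) ^ θ *
      (∫⁻ x, ENNReal.ofReal (Real.exp (-v * V x)) ∂η) ^ (1 - θ) := by
  rcases eq_or_lt_of_le h0 with h | h0'
  · simp [← h]
  rcases eq_or_lt_of_le h1 with h | h1'
  · simp [h]
  have hpq : Real.HolderConjugate θ⁻¹ (1 - θ)⁻¹ :=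
    ⟨by rw [inv_inv, inv_inv]; ring, inv_pos.2 h0', inv_pos.2 (by linarith)⟩
  set f : E → ENNReal := fun x => ENNReal.ofReal (Real.exp (-u * V x)) ^ θ with hf_def
  set g : E → ENNReal := fun x => ENNReal.ofReal (Real.exp (-v * V x)) ^ (1 - θ) with hg_def
  have hmu : Measurable fun x => ENNReal.ofReal (Real.exp (-u * V x)) :=
    (Real.measurable_exp.comp (hV.const_mul (-u))).ennreal_ofReal
  have hmv : Measurable fun x => ENNReal.ofReal (Real.exp (-v * V x)) :=
    (Real.measurable_exp.comp (hV.const_mul (-v))).ennreal_ofReal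
  have hf : AEMeasurable f η := (hmu.pow_const _).aemeasurable
  have hg : AEMeasurable g η := (hmv.pow_const _).aemeasurable
  have H := ENNReal.lintegral_mul_le_Lp_mul_Lq η hpq hf hg
  have hfg : ∀ x, (f * g) x = ENNReal.ofReal (Real.exp (-(θ * u + (1 - θ) * v) * V x)) := by
    intro x
    simp only [Pi.mul_apply, hf_def, hg_def, ofReal_exp_rpow,
      ← ENNReal.ofReal_mul (Real.exp_nonneg _), ← Real.exp_add]
    congr 2
    ring
  have hfp : ∀ x, f x ^ θ⁻¹ = ENNReal.ofReal (Real.exp (-u * V x)) := by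
    intro x
    rw [hf_def, ← ENNReal.rpow_mul, mul_inv_cancel₀ (ne_of_gt h0'), ENNReal.rpow_one]
  have hgq : ∀ x, g x ^ (1 - θ)⁻¹ = ENNReal.ofReal (Real.exp (-v * V x)) := by
    intro x
    rw [hg_def, ← ENNReal.rpow_mul, mul_inv_cancel₀ (by linarith : (1:ℝ) - θ ≠ 0),
      ENNReal.rpow_one]
  simp only [hfg, hfp, hgq, one_div, inv_inv] at H
  exact H

theorem ess_antitoneOn {E : Type*} [MeasurableSpace E] (η : Measure E) [IsFiniteMeasure η]
    (V : E → ℝ) (hVmeas : Measurable V) (C : ℝ) (hVbdd : ∀ x, |V x| ≤ C) :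
    AntitoneOn (fun l : ℝ =>
      (∫ x, Real.exp (-l * V x) ∂η) ^ 2 / ∫ x, Real.exp (-(2 * l) * V x) ∂η)
      (Set.Ici 0) := by
  rcases eq_or_ne η 0 with rfl | hη
  · intro a _ b _ _; simp
  intro a ha b hb hab
  rcases eq_or_lt_of_le hab with rfl | hab'
  · exact le_refl _
  simp only [Set.mem_Ici] at ha hb
  -- notation
  set L : ℝ → ENNReal := fun s => ∫⁻ x, ENNReal.ofReal (Real.exp (-s * V x)) ∂η with hL_def
  have hmeas : ∀ s : ℝ, Measurable fun x => Real.exp (-s * V x) :=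
    fun s => Real.measurable_exp.comp (hVmeas.const_mul (-s))
  have hLlt : ∀ s : ℝ, L s < ⊤ := by
    intro s
    have hb : ∀ x, ENNReal.ofReal (Real.exp (-s * V x)) ≤
        ENNReal.ofReal (Real.exp (|s| * C)) := by
      intro x
      apply ENNReal.ofReal_le_ofReal
      apply Real.exp_le_exp.2
      calc -s * V x ≤ |(-s) * V x| := le_abs_self _
        _ = |s| * |V x| := by rw [abs_mul, abs_neg]
        _ ≤ |s| * C := by
            exact mul_le_mul_of_nonneg_left (hVbdd x) (abs_nonneg s)
    calc L s ≤ ∫⁻ _, ENNReal.ofReal (Real.exp (|s| * C)) ∂η := lintegral_mono hb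
      _ = ENNReal.ofReal (Real.exp (|s| * C)) * η Set.univ := lintegral_const _
      _ < ⊤ := ENNReal.mul_lt_top ENNReal.ofReal_lt_top (measure_lt_top η _)
  have hLpos : ∀ s : ℝ, 0 < L s := by
    intro s
    have hb : ∀ x, ENNReal.ofReal (Real.exp (-(|s| * C))) ≤
        ENNReal.ofReal (Real.exp (-s * V x)) := by
      intro x
      apply ENNReal.ofReal_le_ofReal
      apply Real.exp_le_exp.2
      have : -s * V x ≥ -|(-s) * V x| := neg_abs_le _
      calc -(|s| * C) ≤ -(|s| * |V x|) := by
            exact neg_le_neg (mul_le_mul_of_nonneg_left (hVbdd x) (abs_nonneg s))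
        _ = -|(-s) * V x| := by rw [abs_mul, abs_neg]
        _ ≤ -s * V x := neg_abs_le _
    calc (0 : ENNReal) < ENNReal.ofReal (Real.exp (-(|s| * C))) * η Set.univ := by
          apply ENNReal.mul_pos
          · simp [Real.exp_pos]
          · exact (Measure.measure_univ_pos.2 hη).ne'
      _ = ∫⁻ _, ENNReal.ofReal (Real.exp (-(|s| * C))) ∂η := (lintegral_const _).symm
      _ ≤ L s := lintegral_mono hb
  have hIL : ∀ s : ℝ, ∫ x, Real.exp (-s * V x) ∂η = (L s).toReal := by
    intro s
    rw [integral_eq_lintegral_of_nonneg_ae (ae_of_all _ fun x => (Real.exp_pos _).le)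
      (hmeas s).aestronglyMeasurable]
  have hIpos : ∀ s : ℝ, 0 < ∫ x, Real.exp (-s * V x) ∂η := by
    intro s
    rw [hIL s]
    exact ENNReal.toReal_pos (hLpos s).ne' (hLlt s).ne
  -- exponents
  have hden : 0 < 2 * b - a := by linarith
  set θ : ℝ := (b - a) / (2 * b - a) with hθ_def
  set σ : ℝ := a / (2 * b - a) with hσ_def
  have hθ0 : 0 ≤ θ := div_nonneg (by linarith) hden.le
  have hθ1 : θ ≤ 1 := (div_le_one hden).2 (by linarith)
  have hσ0 : 0 ≤ σ := div_nonneg ha hden.le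
  have hσ1 : σ ≤ 1 := (div_le_one hden).2 (by linarith)
  have hsum : 2 * θ + σ = 1 := by
    rw [hθ_def, hσ_def]
    field_simp
    ring
  -- the two interpolation inequalities, in real form
  have hfin : ∀ s : ℝ, ∀ t : ℝ, 0 ≤ t → L s ^ t ≠ ⊤ :=
    fun s t ht => ENNReal.rpow_ne_top_of_nonneg ht (hLlt s).ne
  have hreal : ∀ (w τ : ℝ), 0 ≤ τ → τ ≤ 1 → w = τ * (2 * b) + (1 - τ) * a →
      (L w).toReal ≤ (L (2 * b)).toReal ^ τ * (L a).toReal ^ (1 - τ) := by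
    intro w τ hτ0 hτ1 hw
    have H := lintegral_exp_interp η V hVmeas (2 * b) a τ hτ0 hτ1
    rw [← hw] at H
    have Hfin : L (2 * b) ^ τ * L a ^ (1 - τ) ≠ ⊤ :=
      ENNReal.mul_ne_top (hfin _ _ hτ0) (hfin _ _ (by linarith))
    calc (L w).toReal ≤ (L (2 * b) ^ τ * L a ^ (1 - τ)).toReal :=
          ENNReal.toReal_mono Hfin H
      _ = (L (2 * b)).toReal ^ τ * (L a).toReal ^ (1 - τ) := by
          rw [ENNReal.toReal_mul, ENNReal.toReal_rpow, ENNReal.toReal_rpow]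
  have e1 : (L b).toReal ≤ (L (2 * b)).toReal ^ θ * (L a).toReal ^ (1 - θ) := by
    apply hreal b θ hθ0 hθ1
    rw [hθ_def, show (b - a) / (2 * b - a) * (2 * b) + (1 - (b - a) / (2 * b - a)) * a
      = a + (b - a) / (2 * b - a) * (2 * b - a) by ring, div_mul_cancel₀ _ hden.ne']
    ring
  have e2 : (L (2 * a)).toReal ≤ (L (2 * b)).toReal ^ σ * (L a).toReal ^ (1 - σ) := by
    apply hreal (2 * a) σ hσ0 hσ1
    rw [hσ_def]
    field_simp
    ring
  -- positivity of real values
  have hpos : ∀ s : ℝ, 0 < (L s).toReal :=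
    fun s => ENNReal.toReal_pos (hLpos s).ne' (hLlt s).ne
  set X := (L (2 * b)).toReal with hX_def
  set Y := (L a).toReal with hY_def
  have hX : 0 < X := hpos _
  have hY : 0 < Y := hpos _
  have halg : (X ^ θ * Y ^ (1 - θ)) ^ 2 * (X ^ σ * Y ^ (1 - σ)) = Y ^ 2 * X := by
    rw [mul_pow, ← Real.rpow_natCast (X ^ θ) 2, ← Real.rpow_natCast (Y ^ (1 - θ)) 2,
      ← Real.rpow_mul hX.le, ← Real.rpow_mul hY.le, mul_mul_mul_comm,
      ← Real.rpow_add hX, ← Real.rpow_add hY]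
    rw [show θ * (2 : ℕ) + σ = 1 by push_cast; linarith,
      show (1 - θ) * (2 : ℕ) + (1 - σ) = 2 by push_cast; linarith]
    rw [Real.rpow_one, show (2 : ℝ) = ((2 : ℕ) : ℝ) by norm_num, Real.rpow_natCast]
    ring
  have key : (L b).toReal ^ 2 * (L (2 * a)).toReal ≤ Y ^ 2 * X := by
    calc (L b).toReal ^ 2 * (L (2 * a)).toReal
        ≤ (X ^ θ * Y ^ (1 - θ)) ^ 2 * (X ^ σ * Y ^ (1 - σ)) := by
          apply mul_le_mul (pow_le_pow_left₀ (hpos b).le e1 2) e2 (hpos _).le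
          positivity
      _ = Y ^ 2 * X := halg
  -- conclude
  simp only
  rw [div_le_div_iff₀ (by rw [show -(2 * b) = -(2 * b) from rfl]; exact hIpos (2 * b))
    (hIpos (2 * a))]
  rw [hIL b, hIL a, hIL (2 * a), hIL (2 * b)]
  calc (L b).toReal ^ 2 * (L (2 * a)).toReal ≤ Y ^ 2 * X := key
    _ = (L a).toReal ^ 2 * (L (2 * b)).toReal := by rw [hX_def, hY_def]
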